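/- Let π : H → ℤ be any function satisfying π(t^p · b^q · ι(w)) = q for all p, q ∈ ℤ and all w ∈ F₂ not beginning with b^{±1}. Then for every u ∈ H, either π(u · bⁿ) = π(u) + n for all n ∈ ℤ (the restriction of π to the coset u⟨b⟩ is a translation), or π(u · bⁿ) = π(u) for all n ∈ ℤ (the restriction is constant). Moreover, for u = 1 the first alternative holds, i.e. π(bⁿ) = n for all n ∈ ℤ. -/

import Mathlib

open List

namespace FreeGroup
variable {α : Type*} [DecidableEq α]


lemma reduce_cons_self' {x : α × Bool} {L : List (α × Bool)}
    (h : reduce (x :: L) = x :: L) :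
    reduce L = L ∧ ∀ z ∈ L.head?, ¬(x.1 = z.1 ∧ x.2 = !z.2) := by
  have hs : reduce L <+ L := Red.sublist (reduce.red (L := L))
  rw [reduce.cons] at h
  rcases hr : reduce L with _ | ⟨hd, tl⟩
  · rw [hr] at h
    replace h : [x] = x :: L := h
    have : L = [] := by
      cases L with
      | nil => rfl
      | cons a M => simp at h
    subst this
    simp
  · rw [hr] at h
    replace h : (if x.1 = hd.1 ∧ x.2 = !hd.2 then tl else x :: hd :: tl) = x :: L := h
    split_ifs at h with hc
    · exfalso
      have h1 : (reduce L).length ≤ L.length := hs.length_le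
      rw [hr] at h1
      have h2 : tl.length = (x :: L).length := by rw [h]
      simp at h1 h2
      omega
    · have hL : L = hd :: tl := by
        injection h with _ h2
        exact h2.symm
      refine ⟨by rw [hL, ← hr], ?_⟩
      intro z hz
      rw [hL] at hz
      simp at hz
      subst hz
      exact hc

lemma reduce_append_single' (y : α × Bool) :
    ∀ L : List (α × Bool), reduce L = L →
      reduce (L ++ [y]) = L ++ [y] ∨
        ∃ L', L = L' ++ [(y.1, !y.2)] ∧ reduce (L ++ [y]) = L' := by
  intro L
  induction L with
  | nil => intro _; left; simp [reduce_singleton]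
  | cons x L ih =>
    intro hL
    obtain ⟨hL', hnc⟩ := reduce_cons_self' hL
    rcases ih hL' with h | ⟨L', hL'eq, hred⟩
    · cases L with
      | nil =>
        have key : reduce ((x :: ([] : List (α × Bool))) ++ [y]) =
            if x.1 = y.1 ∧ x.2 = !y.2 then [] else x :: y :: [] := by
          simp only [List.nil_append] at h ⊢
          rw [List.singleton_append, reduce.cons, h]
        by_cases hc : x.1 = y.1 ∧ x.2 = !y.2
        · right
          refine ⟨[], ?_, ?_⟩
          · have : x = (y.1, !y.2) := Prod.ext hc.1 (by rw [hc.2])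
            simp [this]
          · rw [key, if_pos hc]
        · left
          rw [key, if_neg hc]
          simp
      | cons z L₂ =>
        have hz : ¬(x.1 = z.1 ∧ x.2 = !z.2) := hnc z (by simp)
        have key : reduce ((x :: z :: L₂) ++ [y]) =
            if x.1 = z.1 ∧ x.2 = !z.2 then L₂ ++ [y] else x :: z :: L₂ ++ [y] := by
          rw [List.cons_append, reduce.cons, h]
          rfl
        left
        rw [key, if_neg hz]
    · cases L' with
      | nil =>
        simp only [List.nil_append] at hL'eq
        have key : reduce ((x :: L) ++ [y]) = [x] := by
          rw [List.cons_append, reduce.cons, hred]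
        right
        exact ⟨[x], by simp [hL'eq], key⟩
      | cons z L₂ =>
        have hz : ¬(x.1 = z.1 ∧ x.2 = !z.2) := by
          apply hnc z
          rw [hL'eq]
          simp
        have key : reduce ((x :: L) ++ [y]) =
            if x.1 = z.1 ∧ x.2 = !z.2 then L₂ else x :: z :: L₂ := by
          rw [List.cons_append, reduce.cons, hred]
        rw [if_neg hz] at key
        right
        exact ⟨x :: z :: L₂, by rw [hL'eq]; simp, key⟩

end FreeGroup



/-- Generators of `H`: `a = 0`, `b = 1`, `t = 2`.
Relators: `t·b·t⁻¹·b⁻¹` and `t·a·t⁻¹·a⁻¹·b⁻¹`. -/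
def hRels : Set (FreeGroup (Fin 3)) :=
  { FreeGroup.of (2 : Fin 3) * FreeGroup.of (1 : Fin 3) * (FreeGroup.of (2 : Fin 3))⁻¹ *
      (FreeGroup.of (1 : Fin 3))⁻¹,
    FreeGroup.of (2 : Fin 3) * FreeGroup.of (0 : Fin 3) * (FreeGroup.of (2 : Fin 3))⁻¹ *
      (FreeGroup.of (0 : Fin 3))⁻¹ * (FreeGroup.of (1 : Fin 3))⁻¹ }

/-- The group `H = ⟨a, b, t ∣ t·b·t⁻¹ = b, t·a·t⁻¹ = b·a⟩`. -/
abbrev HGrp : Type := PresentedGroup hRels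

/-- The image of the generator `a` in `H`. -/
def aH : HGrp := PresentedGroup.of 0
/-- The image of the generator `b` in `H`. -/
def bH : HGrp := PresentedGroup.of 1
/-- The image of the generator `t` in `H`. -/
def tH : HGrp := PresentedGroup.of 2

/-- The free group on two generators `a = 0`, `b = 1`. -/
abbrev F₂ : Type := FreeGroup (Fin 2)

/-- `w ∈ F₂` does not begin with `b` or `b⁻¹`: the first letter of its reduced word
(if any) is not the generator `b = 1`. -/
def NoLeadB (w : F₂) : Prop := ∀ l ∈ w.toWord.head?, l.1 ≠ (1 : Fin 2)

/-- The homomorphism `ι : F₂ →* H` sending the generators `a`, `b` of `F₂` to the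
elements `a`, `b` of `H`. -/
def ι : F₂ →* HGrp := FreeGroup.lift (fun i => if i = 0 then aH else bH)


namespace PiAux

open FreeGroup

abbrev aF : F₂ := FreeGroup.of 0
abbrev bF : F₂ := FreeGroup.of 1

lemma ι_a : ι aF = aH := by simp [ι, lift_apply_of]
lemma ι_b : ι bF = bH := by simp [ι, lift_apply_of]

lemma rel_one {r : FreeGroup (Fin 3)} (hr : r ∈ hRels) :
    PresentedGroup.mk hRels r = 1 :=
  (QuotientGroup.eq_one_iff _).mpr (Subgroup.subset_normalClosure hr)

lemma mk_of (i : Fin 3) : PresentedGroup.mk hRels (FreeGroup.of i) = PresentedGroup.of i := rfl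

lemma rel_b : tH * bH = bH * tH := by
  have h := rel_one (Set.mem_insert _ _)
  have h' : tH * bH * tH⁻¹ * bH⁻¹ = 1 := h
  calc tH * bH = (tH * bH * tH⁻¹ * bH⁻¹) * (bH * tH) := by group
    _ = bH * tH := by rw [h', one_mul]

lemma rel_a : tH * aH = bH * aH * tH := by
  have h := rel_one (Set.mem_insert_of_mem _ rfl)
  have h' : tH * aH * tH⁻¹ * aH⁻¹ * bH⁻¹ = 1 := h
  calc tH * aH = (tH * aH * tH⁻¹ * aH⁻¹ * bH⁻¹) * (bH * aH * tH) := by group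
    _ = bH * aH * tH := by rw [h', one_mul]

lemma rel_b_inv : tH * bH⁻¹ = bH⁻¹ * tH := by
  have := rel_b
  calc tH * bH⁻¹ = bH⁻¹ * (bH * tH) * bH⁻¹ := by group
    _ = bH⁻¹ * (tH * bH) * bH⁻¹ := by rw [← rel_b]
    _ = bH⁻¹ * tH := by group

/-- `φf(a) = b·a`, `φf(b) = b`. -/
def φf : F₂ →* F₂ := FreeGroup.lift (fun i => if i = 0 then bF * aF else bF)
/-- `φb(a) = b⁻¹·a`, `φb(b) = b`. -/
def φb : F₂ →* F₂ := FreeGroup.lift (fun i => if i = 0 then bF⁻¹ * aF else bF)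

lemma φf_a : φf aF = bF * aF := by simp [φf, lift_apply_of]
lemma φf_b : φf bF = bF := by simp [φf, lift_apply_of]
lemma φb_a : φb aF = bF⁻¹ * aF := by simp [φb, lift_apply_of]
lemma φb_b : φb bF = bF := by simp [φb, lift_apply_of]

lemma conj_t (v : F₂) : tH * ι v * tH⁻¹ = ι (φf v) := by
  have key : ((MulAut.conj tH).toMonoidHom.comp ι : F₂ →* HGrp) = ι.comp φf := by
    apply FreeGroup.ext_hom
    intro i
    simp only [MonoidHom.comp_apply, MulEquiv.coe_toMonoidHom, MulAut.conj_apply]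
    fin_cases i <;> simp only [Fin.zero_eta, Fin.mk_one]
    · show tH * ι aF * tH⁻¹ = ι (φf aF)
      rw [ι_a, φf_a, MonoidHom.map_mul, ι_a, ι_b, rel_a]
      group
    · show tH * ι bF * tH⁻¹ = ι (φf bF)
      rw [ι_b, φf_b, ι_b, rel_b]
      group
  have h := DFunLike.congr_fun key v
  simpa using h

lemma conj_t_inv (v : F₂) : tH⁻¹ * ι v * tH = ι (φb v) := by
  have key : ((MulAut.conj tH⁻¹).toMonoidHom.comp ι : F₂ →* HGrp) = ι.comp φb := by
    apply FreeGroup.ext_hom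
    intro i
    simp only [MonoidHom.comp_apply, MulEquiv.coe_toMonoidHom, MulAut.conj_apply, inv_inv]
    fin_cases i <;> simp only [Fin.zero_eta, Fin.mk_one]
    · show tH⁻¹ * ι aF * tH⁻¹⁻¹ = ι (φb aF)
      rw [inv_inv, ι_a, φb_a, MonoidHom.map_mul, MonoidHom.map_inv, ι_a, ι_b]
      calc tH⁻¹ * aH * tH = tH⁻¹ * bH⁻¹ * (bH * aH * tH) := by group
        _ = tH⁻¹ * bH⁻¹ * (tH * aH) := by rw [← rel_a]
        _ = tH⁻¹ * (bH⁻¹ * tH) * aH := by group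
        _ = tH⁻¹ * (tH * bH⁻¹) * aH := by rw [← rel_b_inv]
        _ = bH⁻¹ * aH := by group
    · show tH⁻¹ * ι bF * tH⁻¹⁻¹ = ι (φb bF)
      rw [inv_inv, ι_b, φb_b, ι_b]
      calc tH⁻¹ * bH * tH = tH⁻¹ * (bH * tH) := by group
        _ = tH⁻¹ * (tH * bH) := by rw [← rel_b]
        _ = bH := by group
  have h := DFunLike.congr_fun key v
  simpa using h

lemma iota_mul_tpow (n : ℤ) (v : F₂) : ∃ v', ι v * tH ^ n = tH ^ n * ι v' := by
  induction n using Int.induction_on with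
  | zero => exact ⟨v, by simp⟩
  | succ n ih =>
    obtain ⟨v', hv⟩ := ih
    refine ⟨φb v', ?_⟩
    have h1 : tH^((n : ℤ) + 1) = tH ^ (n : ℤ) * tH := by rw [zpow_add, zpow_one]
    rw [h1, ← mul_assoc, hv, mul_assoc, mul_assoc]
    congr 1
    calc ι v' * tH = tH * (tH⁻¹ * ι v' * tH) := by group
      _ = tH * ι (φb v') := by rw [conj_t_inv]
  | pred n ih =>
    obtain ⟨v', hv⟩ := ih
    refine ⟨φf v', ?_⟩
    have h1 : tH^(-(n : ℤ) - 1) = tH ^ (-(n : ℤ)) * tH⁻¹ := by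
      rw [sub_eq_add_neg, zpow_add, zpow_neg_one]
    rw [h1, ← mul_assoc, hv, mul_assoc, mul_assoc]
    congr 1
    calc ι v' * tH⁻¹ = tH⁻¹ * (tH * ι v' * tH⁻¹) := by group
      _ = tH⁻¹ * ι (φf v') := by rw [conj_t]

def repSet : Subgroup HGrp where
  carrier := {u | ∃ (p : ℤ) (v : F₂), u = tH ^ p * ι v}
  one_mem' := ⟨0, 1, by simp⟩
  mul_mem' := by
    rintro x y ⟨p, v, rfl⟩ ⟨r, w, rfl⟩
    obtain ⟨v', hv⟩ := iota_mul_tpow r v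
    refine ⟨p + r, v' * w, ?_⟩
    rw [MonoidHom.map_mul, zpow_add]
    calc tH ^ p * ι v * (tH ^ r * ι w) = tH ^ p * (ι v * tH ^ r) * ι w := by group
      _ = tH ^ p * (tH ^ r * ι v') * ι w := by rw [hv]
      _ = tH ^ p * tH ^ r * (ι v' * ι w) := by group
  inv_mem' := by
    rintro x ⟨p, v, rfl⟩
    obtain ⟨v', hv⟩ := iota_mul_tpow (-p) v⁻¹
    refine ⟨-p, v', ?_⟩
    calc (tH ^ p * ι v)⁻¹ = ι v⁻¹ * tH ^ (-p) := by rw [MonoidHom.map_inv]; group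
      _ = tH ^ (-p) * ι v' := hv

lemma exists_rep (u : HGrp) : ∃ (p : ℤ) (v : F₂), u = tH ^ p * ι v := by
  refine PresentedGroup.generated_by hRels repSet ?_ u
  intro j
  fin_cases j
  · exact ⟨0, aF, by rw [ι_a]; simp [aH]⟩
  · exact ⟨0, bF, by rw [ι_b]; simp [bH]⟩
  · exact ⟨1, 1, by simp [tH]⟩

lemma noLeadB_one : NoLeadB 1 := by
  intro l hl
  rw [toWord_one] at hl
  simp at hl

lemma decomp_aux : ∀ (N : ℕ) (v : F₂), v.toWord.length ≤ N →
    ∃ (q : ℤ) (w : F₂), NoLeadB w ∧ v = bF ^ q * w := by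
  intro N
  induction N with
  | zero =>
    intro v hv
    have : v = 1 := toWord_eq_nil_iff.mp (List.length_eq_zero_iff.mp (Nat.le_zero.mp hv))
    exact ⟨0, 1, noLeadB_one, by simp [this]⟩
  | succ N ih =>
    intro v hv
    rcases hword : v.toWord with _ | ⟨⟨i, s⟩, tl⟩
    · exact ⟨0, 1, noLeadB_one, by simp [toWord_eq_nil_iff.mp hword]⟩
    by_cases hi : i = (1 : Fin 2)
    · subst hi
      set v₁ : F₂ := FreeGroup.mk [((1 : Fin 2), !s)] * v with hv₁
      have hw1 : v₁.toWord = tl := by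
        conv_lhs => rw [hv₁, show v = FreeGroup.mk v.toWord from mk_toWord.symm]
        rw [mul_mk, toWord_mk, List.singleton_append, reduce.cons,
          show reduce v.toWord = ((1 : Fin 2), s) :: tl by rw [reduce_toWord, hword]]
        simp
      obtain ⟨q, w, hw, hdec⟩ := ih v₁ (by
        rw [hw1]
        have := hv
        rw [hword] at this
        simpa using Nat.lt_succ_iff.mp (Nat.lt_of_lt_of_le (Nat.lt_succ_self _) this))
      refine ⟨(if s then (1 : ℤ) else -1) + q, w, hw, ?_⟩
      have hmuleq : v = (FreeGroup.mk [((1 : Fin 2), !s)])⁻¹ * v₁ := by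
        rw [hv₁, inv_mul_cancel_left]
      have hbe : (FreeGroup.mk [((1 : Fin 2), !s)])⁻¹ = bF ^ (if s then (1 : ℤ) else -1) := by
        cases s
        · simp only [Bool.not_false, if_false, zpow_neg, zpow_one]
          rfl
        · simp only [Bool.not_true, if_true, zpow_one]
          rw [show (FreeGroup.mk [((1 : Fin 2), false)]) = bF⁻¹ by
            rw [show (bF : F₂) = FreeGroup.mk [((1 : Fin 2), true)] from rfl, inv_mk]
            simp [invRev], inv_inv]
      rw [hmuleq, hbe, hdec, ← mul_assoc, ← zpow_add]
    · refine ⟨0, v, ?_, by simp⟩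
      intro l hl
      rw [hword] at hl
      simp at hl
      rw [← hl]
      exact hi

lemma stab_single (w : F₂) (h1 : w.toWord ≠ []) (h2 : NoLeadB w) (s : Bool) :
    (w * FreeGroup.mk [((1 : Fin 2), s)]).toWord ≠ [] ∧
      NoLeadB (w * FreeGroup.mk [((1 : Fin 2), s)]) := by
  have hw : (w * FreeGroup.mk [((1 : Fin 2), s)]).toWord
      = reduce (w.toWord ++ [((1 : Fin 2), s)]) := by
    conv_lhs => rw [show w = FreeGroup.mk w.toWord from mk_toWord.symm]
    rw [mul_mk, toWord_mk]
  rcases reduce_append_single' ((1 : Fin 2), s) w.toWord (reduce_toWord w) with h | ⟨L', hL', hred⟩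
  · rw [h] at hw
    obtain ⟨a, rest, ha⟩ : ∃ a rest, w.toWord = a :: rest := by
      rcases hx : w.toWord with _ | ⟨a, r⟩
      · exact absurd hx h1
      · exact ⟨a, r, rfl⟩
    have hhead : ∀ l ∈ w.toWord.head?, l.1 ≠ (1 : Fin 2) := h2
    refine ⟨by rw [hw, ha]; simp, ?_⟩
    intro l hl
    rw [hw, ha] at hl
    simp only [List.cons_append, List.head?_cons, Option.mem_some_iff] at hl
    subst hl
    exact hhead _ (by rw [ha]; rfl)
  · rw [hred] at hw
    cases hL's : L' with
    | nil =>
      exfalso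
      rw [hL's, List.nil_append] at hL'
      exact h2 ((1 : Fin 2), !s) (by rw [hL']; rfl) rfl
    | cons a rest =>
      rw [hL's] at hL' hred hw
      have hahead : a.1 ≠ (1 : Fin 2) := h2 a (by rw [hL']; rfl)
      refine ⟨by rw [hw]; simp, ?_⟩
      intro l hl
      rw [hw] at hl
      simp only [List.head?_cons, Option.mem_some_iff] at hl
      subst hl
      exact hahead

lemma bF_inv_mk : (bF : F₂)⁻¹ = FreeGroup.mk [((1 : Fin 2), false)] := by
  rw [show (bF : F₂) = FreeGroup.mk [((1 : Fin 2), true)] from rfl, inv_mk]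
  simp [invRev]

lemma stab_zpow (w : F₂) (h1 : w.toWord ≠ []) (h2 : NoLeadB w) (n : ℤ) :
    (w * bF ^ n).toWord ≠ [] ∧ NoLeadB (w * bF ^ n) := by
  induction n using Int.induction_on with
  | zero => rw [zpow_zero, mul_one]; exact ⟨h1, h2⟩
  | succ n ih =>
    have e : w * bF ^ ((n : ℤ) + 1) = (w * bF ^ (n : ℤ)) * FreeGroup.mk [((1 : Fin 2), true)] := by
      rw [zpow_add, zpow_one, ← mul_assoc]
      rfl
    rw [e]
    exact stab_single _ ih.1 ih.2 true
  | pred n ih =>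
    have e : w * bF ^ (-(n : ℤ) - 1)
        = (w * bF ^ (-(n : ℤ))) * FreeGroup.mk [((1 : Fin 2), false)] := by
      rw [sub_eq_add_neg, zpow_add, zpow_neg_one, ← mul_assoc, bF_inv_mk]
    rw [e]
    exact stab_single _ ih.1 ih.2 false

end PiAux

open PiAux FreeGroup

/-- For any `π : H → ℤ` reading off the exponent `q` in the normal form `t^p · b^q · ι(w)`:
the restriction of `π` to any coset `u⟨b⟩` is either a translation or constant; moreover
the coset `⟨b⟩` itself falls into the translation case, i.e. `π(bⁿ) = n`. -/
theorem pi_coset_translation_or_constant (π : HGrp → ℤ)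
    (hπ : ∀ (p q : ℤ) (w : F₂), NoLeadB w → π (tH ^ p * bH ^ q * ι w) = q) :
    (∀ u : HGrp,
      (∀ n : ℤ, π (u * bH ^ n) = π u + n) ∨ (∀ n : ℤ, π (u * bH ^ n) = π u)) ∧
    (∀ n : ℤ, π (bH ^ n) = n) := by
  have hbH : ∀ n : ℤ, π (bH ^ n) = n := by
    intro n
    have h := hπ 0 n 1 noLeadB_one
    simpa using h
  refine ⟨?_, hbH⟩
  intro u
  obtain ⟨p, v, rfl⟩ := exists_rep u
  obtain ⟨q, w, hw, rfl⟩ := decomp_aux v.toWord.length v le_rfl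
  by_cases hwone : w.toWord = []
  · left
    intro n
    have hw1 : w = 1 := toWord_eq_nil_iff.mp hwone
    subst hw1
    have e1 : tH ^ p * ι (bF ^ q * 1) * bH ^ n = tH ^ p * bH ^ (q + n) * ι 1 := by
      simp [map_zpow, ι_b, zpow_add, mul_assoc]
    have e2 : tH ^ p * ι (bF ^ q * 1) = tH ^ p * bH ^ q * ι 1 := by
      simp [map_zpow, ι_b]
    rw [e1, e2, hπ p (q + n) 1 noLeadB_one, hπ p q 1 noLeadB_one]
  · right
    intro n
    have hst := stab_zpow w hwone hw n
    have e1 : tH ^ p * ι (bF ^ q * w) * bH ^ n = tH ^ p * bH ^ q * ι (w * bF ^ n) := by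
      simp [map_zpow, ι_b, mul_assoc]
    have e2 : tH ^ p * ι (bF ^ q * w) = tH ^ p * bH ^ q * ι w := by
      simp [map_zpow, ι_b, mul_assoc]
    rw [e1, e2, hπ p q _ hst.2, hπ p q w hw]
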